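/- arXiv:1806.00919 — 3 statements merged into one kernel-verified Lean document; each statement's English description precedes it below -/
import Mathlib

section
/- Let S be a nonempty finite set and Y a finite label set. Let Q : S → Y → [0,1] with ∑_{y∈Y} Q(y|x) = 1 for all x ∈ S. Define P(x|y) = Q(y|x) / ∑_{x'∈S} Q(y|x') whenever the denominator is nonzero, and T(y'|y) = ∑_{x∈S} P(x|y) Q(y'|x). Then T is diagonal (i.e., T(y'|y) = δ_{y,y'} for all y,y') if and only if Q(y|x) ∈ {0,1} for all x ∈ S, y ∈ Y, and for every y ∈ Y the set {x ∈ S : Q(y|x) = 1} is nonempty. -/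
open Finset

/-- Theorem 1: the label transition matrix is diagonal iff the model is
binary-valued and each label has a nonempty confident set. -/
theorem label_transition_diagonal_iff
    {S Y : Type*} [Fintype S] [Fintype Y] [DecidableEq Y] [Nonempty S] [Nonempty Y]
    (Q : S → Y → ℝ)
    (h01 : ∀ x y, Q x y ∈ Set.Icc (0:ℝ) 1)
    (hrow : ∀ x, ∑ y, Q x y = 1)
    (T : Y → Y → ℝ)
    (hT : ∀ y y', T y' y = ∑ x, (Q x y / ∑ x', Q x' y) * Q x y') :
    (∀ y y', T y' y = if y' = y then 1 else 0) ↔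
      ((∀ x y, Q x y = 0 ∨ Q x y = 1) ∧ ∀ y, ∃ x, Q x y = 1) := by
  constructor
  · intro hdiag
    have h1 : ∀ y, ∑ x, (Q x y / ∑ x', Q x' y) * Q x y = 1 := by
      intro y
      have := hT y y
      rw [hdiag y y] at this
      simpa using this.symm
    have hD : ∀ y, (0:ℝ) < ∑ x', Q x' y := by
      intro y
      rcases (Finset.sum_nonneg fun x _ => (h01 x y).1).lt_or_eq with h | h
      · exact h
      · exfalso
        have h1y := h1 y
        rw [← h] at h1y
        simp at h1y
    have h2 : ∀ y, ∑ x, Q x y * Q x y = ∑ x', Q x' y := by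
      intro y
      have h := h1 y
      have hD' := (hD y).ne'
      rw [show (∑ x, (Q x y / ∑ x', Q x' y) * Q x y)
            = (∑ x, Q x y * Q x y) / (∑ x', Q x' y) by
          rw [Finset.sum_div]
          exact Finset.sum_congr rfl fun x _ => by ring] at h
      field_simp at h
      simpa only [sq] using h
    have h3 : ∀ x y, Q x y = 0 ∨ Q x y = 1 := by
      intro x y
      have hz : ∑ x, Q x y * (1 - Q x y) = 0 := by
        have : ∑ x, Q x y * (1 - Q x y) = (∑ x', Q x' y) - ∑ x, Q x y * Q x y := by
          rw [← Finset.sum_sub_distrib]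
          · exact Finset.sum_congr rfl fun x _ => by ring
        rw [this, h2 y, sub_self]
      have hterm := (Finset.sum_eq_zero_iff_of_nonneg
        (fun x _ => mul_nonneg (h01 x y).1 (by linarith [(h01 x y).2]))).mp hz x
        (Finset.mem_univ x)
      rcases mul_eq_zero.mp hterm with h | h
      · exact Or.inl h
      · exact Or.inr (by linarith)
    refine ⟨h3, ?_⟩
    intro y
    by_contra hc
    push_neg at hc
    have : ∑ x', Q x' y = 0 :=
      Finset.sum_eq_zero fun x _ => (h3 x y).resolve_right (hc x)
    linarith [hD y]
  · rintro ⟨hbin, hex⟩ y y'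
    have hD : (0:ℝ) < ∑ x', Q x' y := by
      obtain ⟨x0, hx0⟩ := hex y
      exact Finset.sum_pos' (fun x _ => (h01 x y).1)
        ⟨x0, Finset.mem_univ _, by rw [hx0]; norm_num⟩
    have hkey : ∀ x, Q x y * Q x y' = (if y' = y then 1 else 0) * Q x y := by
      intro x
      rcases hbin x y with h | h
      · simp [h]
      · by_cases hyy : y' = y
        · simp [hyy, h]
        · have hz : Q x y' = 0 := by
            have hsum := hrow x
            rw [← Finset.add_sum_erase _ _ (Finset.mem_univ y)] at hsum
            have h0 : ∑ y'' ∈ Finset.univ.erase y, Q x y'' = 0 := by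
              linarith
            exact (Finset.sum_eq_zero_iff_of_nonneg
              (fun z _ => (h01 x z).1)).mp h0 y'
              (Finset.mem_erase.mpr ⟨hyy, Finset.mem_univ _⟩)
          simp [hz, hyy]
    rw [hT]
    have : ∑ x, (Q x y / ∑ x', Q x' y) * Q x y'
        = ((if y' = y then 1 else 0) * ∑ x, Q x y) / (∑ x', Q x' y) := by
      rw [Finset.mul_sum, Finset.sum_div]
      refine Finset.sum_congr rfl fun x _ => ?_
      rw [div_mul_eq_mul_div, hkey x]
    rw [this, mul_div_assoc, div_self hD.ne', mul_one]
end

section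
/- Let S, Y be finite nonempty sets and Q : S → Y → [0,1] row-stochastic with positive column sums. Define P(x|y) = Q(y|x)/∑_{x'} Q(y|x'), the label transition matrix T(y'|y) = ∑_{x∈S} P(x|y)Q(y'|x), and the instance transition matrix S(x'|x) = ∑_y P(x'|y)Q(y|x). If T is the identity matrix, then for every y ∈ Y, the measure μ_y on S defined by μ_y(x) = Q(y|x) is stationary for the Markov chain with transition kernel S, i.e., ∑_{x∈S} S(x'|x) μ_y(x) = μ_y(x') for all x' ∈ S. -/
open Finset

/-- If the label transition matrix is the identity, then for each label `y`
the measure `μ_y(x) = Q(y|x)` is stationary for the instance transition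
Markov chain. -/
theorem stationary_of_identity_label_transition
    {S Y : Type*} [Fintype S] [Fintype Y] [DecidableEq Y] [Nonempty S] [Nonempty Y]
    (Q : S → Y → ℝ)
    (h01 : ∀ x y, Q x y ∈ Set.Icc (0:ℝ) 1)
    (hrow : ∀ x, ∑ y, Q x y = 1)
    (hcol : ∀ y, 0 < ∑ x, Q x y)
    (P : S → Y → ℝ) (hP : ∀ x y, P x y = Q x y / ∑ x', Q x' y)
    (T : Y → Y → ℝ) (hT : ∀ y y', T y' y = ∑ x, P x y * Q x y')
    (K : S → S → ℝ) (hK : ∀ x x', K x x' = ∑ y, P x' y * Q x y)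
    (hTid : ∀ y y', T y' y = if y' = y then 1 else 0) :
    ∀ (y : Y) (x' : S), ∑ x, K x x' * Q x y = Q x' y := by
  intro y x'
  have key : ∑ x, K x x' * Q x y = ∑ y', Q x' y' * T y y' := by
    simp only [hK, Finset.sum_mul]
    rw [Finset.sum_comm]
    refine Finset.sum_congr rfl fun y' _ => ?_
    have hc : (∑ x, Q x y') ≠ 0 := (hcol y').ne'
    have : T y y' = ∑ x, P x y' * Q x y := hT y' y
    rw [this, Finset.mul_sum]
    refine Finset.sum_congr rfl fun x _ => ?_
    rw [hP, hP]
    field_simp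
  rw [key]
  simp only [hTid]
  rw [Finset.sum_eq_single y] <;> simp +contextual [eq_comm]
end

section
/- Let S, Y be finite nonempty sets and Q : S → Y → [0,1] row-stochastic with positive column sums, with induced instance transition Markov chain S(x'|x) = ∑_y (Q(y|x')/∑_{x''}Q(y|x''))·Q(y|x). If this Markov chain on S has exactly |Y| pairwise disjoint irreducible recurrent classes, then the label transition matrix T(y'|y) = ∑_x P(x|y)Q(y'|x) is the identity matrix. -/
open Finset

/-- 'Only if' direction of Theorem 3: if the instance transition Markov
chain has exactly `|Y|` pairwise disjoint irreducible recurrent (closed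
communicating) classes, then the label transition matrix is the identity.
A recurrent class is encoded as a nonempty closed set on which any two
states communicate through paths of positive transition probability. -/
theorem identity_label_transition_of_recurrent_classes
    {S Y : Type*} [Fintype S] [Fintype Y] [DecidableEq S] [DecidableEq Y]
    [Nonempty S] [Nonempty Y]
    (Q : S → Y → ℝ)
    (h01 : ∀ x y, Q x y ∈ Set.Icc (0:ℝ) 1)
    (hrow : ∀ x, ∑ y, Q x y = 1)
    (hcol : ∀ y, 0 < ∑ x, Q x y)
    (K : S → S → ℝ)
    (hK : ∀ x x', K x x' = ∑ y, (Q x' y / ∑ x'', Q x'' y) * Q x y)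
    (C : Finset (Finset S))
    (hcard : C.card = Fintype.card Y)
    (hdisj : ∀ c ∈ C, ∀ c' ∈ C, c ≠ c' → Disjoint c c')
    (hnonempty : ∀ c ∈ C, c.Nonempty)
    (hclosed : ∀ c ∈ C, ∀ x ∈ c, ∀ x' : S, 0 < K x x' → x' ∈ c)
    (hirr : ∀ c ∈ C, ∀ x ∈ c, ∀ x' ∈ c,
      Relation.ReflTransGen (fun a b : S => 0 < K a b) x x')
    (hall : ∀ x : S, (∃ c ∈ C, x ∈ c) ∨
      ∃ c ∈ C, ∃ x' ∈ c, Relation.ReflTransGen (fun a b : S => 0 < K a b) x x') :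
    ∀ y y' : Y, (∑ x, (Q x y / ∑ x', Q x' y) * Q x y') = if y' = y then 1 else 0 := by
  have hQ0 : ∀ x y, 0 ≤ Q x y := fun x y => (h01 x y).1
  -- characterization of positivity of K
  have hKpos : ∀ a b : S, 0 < K a b ↔ ∃ y, 0 < Q a y ∧ 0 < Q b y := by
    intro a b
    rw [hK]
    constructor
    · intro h
      by_contra hcon
      push_neg at hcon
      have hz : ∑ y, (Q b y / ∑ x'', Q x'' y) * Q a y = 0 := by
        refine Finset.sum_eq_zero fun y _ => ?_
        rcases eq_or_lt_of_le (hQ0 a y) with ha | ha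
        · rw [← ha, mul_zero]
        · have hb : Q b y = 0 := le_antisymm (hcon y ha) (hQ0 b y)
          rw [hb, zero_div, zero_mul]
      rw [hz] at h
      exact lt_irrefl _ h
    · rintro ⟨y, ha, hb⟩
      refine Finset.sum_pos' (fun y' _ => ?_) ⟨y, Finset.mem_univ y, ?_⟩
      · exact mul_nonneg (div_nonneg (hQ0 b y') (le_of_lt (hcol y'))) (hQ0 a y')
      · exact mul_pos (div_pos hb (hcol y)) ha
  have hsym : Symmetric (fun a b : S => 0 < K a b) := by
    intro a b h
    rcases (hKpos a b).1 h with ⟨y, ha, hb⟩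
    exact (hKpos b a).2 ⟨y, hb, ha⟩
  -- classes are closed under reachability
  have hclosed' : ∀ c ∈ C, ∀ x ∈ c, ∀ x' : S,
      Relation.ReflTransGen (fun a b : S => 0 < K a b) x x' → x' ∈ c := by
    intro c hc x hx x' h
    induction h with
    | refl => exact hx
    | tail _ hbc ih => exact hclosed c hc _ ih _ hbc
  -- every state lies in some class
  have hcover : ∀ x : S, ∃ c ∈ C, x ∈ c := by
    intro x
    rcases hall x with h | ⟨c, hc, x', hx', hreach⟩
    · exact h
    · exact ⟨c, hc, hclosed' c hc x' hx' x ((@Relation.ReflTransGen.symmetric _ _ ⟨hsym⟩).symm _ _ hreach)⟩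
  -- each label has a state with positive probability
  have hexQ : ∀ y : Y, ∃ x, 0 < Q x y := by
    intro y
    by_contra h
    push_neg at h
    have : ∑ x, Q x y = 0 :=
      Finset.sum_eq_zero fun x _ => le_antisymm (h x) (hQ0 x y)
    exact lt_irrefl 0 (this ▸ hcol y)
  choose x0 hx0 using hexQ
  choose cl hclC hclx using fun y => hcover (x0 y)
  have hsupp : ∀ y x, 0 < Q x y → x ∈ cl y := fun y x hx =>
    hclosed (cl y) (hclC y) (x0 y) (hclx y) x ((hKpos _ _).2 ⟨y, hx0 y, hx⟩)
  -- the map from labels to classes is surjective, hence injective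
  set g : Y → {c // c ∈ C} := fun y => ⟨cl y, hclC y⟩ with hg
  have hgsurj : Function.Surjective g := by
    rintro ⟨c, hc⟩
    obtain ⟨x, hx⟩ := hnonempty c hc
    have hy : ∃ y, 0 < Q x y := by
      by_contra h
      push_neg at h
      have : ∑ y, Q x y = 0 :=
        Finset.sum_eq_zero fun y _ => le_antisymm (h y) (hQ0 x y)
      rw [hrow x] at this
      norm_num at this
    obtain ⟨y, hy⟩ := hy
    refine ⟨y, Subtype.ext ?_⟩
    by_contra hne
    have hd := hdisj (cl y) (hclC y) c hc hne
    exact (Finset.disjoint_left.1 hd (hsupp y x hy)) hx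
  have hginj : Function.Injective g := by
    have hcardeq : Fintype.card Y = Fintype.card {c // c ∈ C} := by
      rw [Fintype.card_coe, hcard]
    exact ((Fintype.bijective_iff_surjective_and_card g).2 ⟨hgsurj, hcardeq⟩).1
  -- supports of distinct labels are disjoint
  have hkey : ∀ x (y y' : Y), y ≠ y' → 0 < Q x y → Q x y' = 0 := by
    intro x y y' hne hpos
    by_contra h
    have hpos' : 0 < Q x y' := lt_of_le_of_ne (hQ0 x y') (Ne.symm h)
    have hcl : cl y = cl y' := by
      by_contra hcne
      have hd := hdisj (cl y) (hclC y) (cl y') (hclC y') hcne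
      exact (Finset.disjoint_left.1 hd (hsupp y x hpos)) (hsupp y' x hpos')
    exact hne (hginj (Subtype.ext hcl))
  -- positive entries of Q are equal to 1
  have hone : ∀ x y, 0 < Q x y → Q x y = 1 := by
    intro x y h
    rw [← hrow x]
    rw [Finset.sum_eq_single y (fun y' _ hne => hkey x y y' (fun he => hne he.symm) h)
      (fun hy => absurd (Finset.mem_univ y) hy)]
  intro y y'
  by_cases hyy : y' = y
  · subst hyy
    rw [if_pos rfl]
    have hterm : ∀ x, (Q x y' / ∑ x', Q x' y') * Q x y' = Q x y' / ∑ x', Q x' y' := by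
      intro x
      rcases eq_or_lt_of_le (hQ0 x y') with h | h
      · rw [← h]; simp
      · rw [hone x y' h, mul_one]
    rw [Finset.sum_congr rfl (fun x _ => hterm x), ← Finset.sum_div,
      div_self (ne_of_gt (hcol y'))]
  · rw [if_neg hyy]
    refine Finset.sum_eq_zero fun x _ => ?_
    rcases eq_or_lt_of_le (hQ0 x y) with h | h
    · rw [← h, zero_div, zero_mul]
    · rw [hkey x y y' (fun he => hyy he.symm) h, mul_zero]
end
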